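/- Let Φ be a quantum operation on 2×2 complex matrices, given by a finite family of Kraus operators (K_m) with ∑_m K_m† K_m = I and Φ(ρ) = ∑_m K_m ρ K_m†. Then for every qubit density matrix ρ, C_{l1}(Φ(ρ)) − C_{l1}(ρ) ≤ max( C_{l1}(Φ(E₀₀)), C_{l1}(Φ(E₁₁)) ), where E₀₀ and E₁₁ are the diagonal matrix units. Consequently the generalized cohering power max over all density matrices ρ of (C_{l1}(Φ(ρ)) − C_{l1}(ρ)) equals the cohering power max over incoherent density matrices σ of C_{l1}(Φ(σ)). -/

import Mathlib

open Matrix BigOperators ComplexOrder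

noncomputable def Cl1 {n : ℕ} (A : Matrix (Fin n) (Fin n) ℂ) : ℝ :=
  ∑ i, ∑ j, if i ≠ j then ‖A i j‖ else 0

def IsDensity {n : ℕ} (ρ : Matrix (Fin n) (Fin n) ℂ) : Prop :=
  ρ.PosSemidef ∧ ρ.trace = 1

def IsQuantumOp {n : ℕ} (Φ : Matrix (Fin n) (Fin n) ℂ → Matrix (Fin n) (Fin n) ℂ) : Prop :=
  ∃ (m : ℕ) (K : Fin m → Matrix (Fin n) (Fin n) ℂ),
    (∑ i, (K i)ᴴ * K i) = 1 ∧ ∀ ρ, Φ ρ = ∑ i, K i * ρ * (K i)ᴴ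

lemma Cl1_nonneg {n : ℕ} (A : Matrix (Fin n) (Fin n) ℂ) : 0 ≤ Cl1 A := by
  apply Finset.sum_nonneg; intro i _; apply Finset.sum_nonneg; intro j _
  split <;> positivity

lemma Cl1_two (A : Matrix (Fin 2) (Fin 2) ℂ) :
    Cl1 A = ‖A 0 1‖ + ‖A 1 0‖ := by
  simp [Cl1, Fin.sum_univ_two]

lemma Cl1_add_le {n : ℕ} (A B : Matrix (Fin n) (Fin n) ℂ) :
    Cl1 (A + B) ≤ Cl1 A + Cl1 B := by
  rw [Cl1, Cl1, Cl1, ← Finset.sum_add_distrib]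
  apply Finset.sum_le_sum; intro i _
  rw [← Finset.sum_add_distrib]
  apply Finset.sum_le_sum; intro j _
  split
  · simpa using norm_add_le (A i j) (B i j)
  · simp

lemma Cl1_smul {n : ℕ} (z : ℂ) (A : Matrix (Fin n) (Fin n) ℂ) :
    Cl1 (z • A) = ‖z‖ * Cl1 A := by
  rw [Cl1, Cl1, Finset.mul_sum]
  congr 1; ext i
  rw [Finset.mul_sum]
  congr 1; ext j
  split <;> simp [mul_comm]

lemma Cl1_diag {n : ℕ} {A : Matrix (Fin n) (Fin n) ℂ} (h : A.IsDiag) : Cl1 A = 0 := by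
  rw [Cl1]
  apply Finset.sum_eq_zero; intro i _
  apply Finset.sum_eq_zero; intro j _
  split
  · rename_i hij
    rw [h hij]
    simp
  · rfl

lemma kraus_col {m : ℕ} (K : Fin m → Matrix (Fin 2) (Fin 2) ℂ)
    (hK : ∑ i, (K i)ᴴ * K i = 1) (j : Fin 2) :
    ∑ i, (‖K i 0 j‖ ^ 2 + ‖K i 1 j‖ ^ 2) = 1 := by
  have h0 := congrFun (congrFun hK j) j
  simp [Matrix.sum_apply, Matrix.mul_apply, Fin.sum_univ_two, Matrix.one_apply] at h0
  have h1 := congrArg Complex.re h0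
  simp at h1
  rw [← h1]
  exact Finset.sum_congr rfl fun i _ => by
    rw [Complex.sq_norm, Complex.sq_norm, Complex.normSq_apply, Complex.normSq_apply]

lemma kraus_bound {m : ℕ} (K : Fin m → Matrix (Fin 2) (Fin 2) ℂ)
    (hK : ∑ i, (K i)ᴴ * K i = 1) :
    ∑ i, (‖K i 0 0‖ * ‖K i 1 1‖
        + ‖K i 0 1‖ * ‖K i 1 0‖) ≤ 1 := by
  set x : Fin m → ℝ := fun i => ‖K i 0 0‖ ^ 2 + ‖K i 1 0‖ ^ 2 with hxdef
  set y : Fin m → ℝ := fun i => ‖K i 0 1‖ ^ 2 + ‖K i 1 1‖ ^ 2 with hydef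
  have hx : ∑ i, x i = 1 := kraus_col K hK 0
  have hy : ∑ i, y i = 1 := kraus_col K hK 1
  have hxn : ∀ i, 0 ≤ x i := fun i => by positivity
  have hyn : ∀ i, 0 ≤ y i := fun i => by positivity
  have step1 : ∀ i, ‖K i 0 0‖ * ‖K i 1 1‖
      + ‖K i 0 1‖ * ‖K i 1 0‖ ≤ Real.sqrt (x i) * Real.sqrt (y i) := by
    intro i
    set a := ‖K i 0 0‖; set b := ‖K i 1 0‖
    set d := ‖K i 0 1‖; set e := ‖K i 1 1‖
    have ha : 0 ≤ a := norm_nonneg _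
    have hb : 0 ≤ b := norm_nonneg _
    have hd : 0 ≤ d := norm_nonneg _
    have he : 0 ≤ e := norm_nonneg _
    have key : (a * e + d * b) ^ 2 ≤ x i * y i := by
      have : x i * y i - (a * e + d * b) ^ 2 = (a * d - b * e) ^ 2 := by
        simp only [hxdef, hydef]; ring
      nlinarith [sq_nonneg (a * d - b * e)]
    calc a * e + d * b = Real.sqrt ((a * e + d * b) ^ 2) := by
          rw [Real.sqrt_sq (by positivity)]
      _ ≤ Real.sqrt (x i * y i) := Real.sqrt_le_sqrt key
      _ = Real.sqrt (x i) * Real.sqrt (y i) := Real.sqrt_mul (hxn i) _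
  calc ∑ i, (‖K i 0 0‖ * ‖K i 1 1‖
        + ‖K i 0 1‖ * ‖K i 1 0‖)
      ≤ ∑ i, Real.sqrt (x i) * Real.sqrt (y i) := Finset.sum_le_sum fun i _ => step1 i
    _ ≤ 1 := by
        have h2 : (∑ i, Real.sqrt (x i) * Real.sqrt (y i)) ^ 2
            ≤ (∑ i, Real.sqrt (x i) ^ 2) * (∑ i, Real.sqrt (y i) ^ 2) :=
          Finset.sum_mul_sq_le_sq_mul_sq _ _ _
        rw [Finset.sum_congr rfl (fun i _ => Real.sq_sqrt (hxn i)),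
            Finset.sum_congr rfl (fun i _ => Real.sq_sqrt (hyn i)), hx, hy, mul_one] at h2
        have h3 : 0 ≤ ∑ i, Real.sqrt (x i) * Real.sqrt (y i) :=
          Finset.sum_nonneg fun i _ => by positivity
        nlinarith

lemma off_bound {m : ℕ} (K : Fin m → Matrix (Fin 2) (Fin 2) ℂ)
    (hK : ∑ i, (K i)ᴴ * K i = 1) (c : ℂ) :
    Cl1 (∑ i, K i * (c • Matrix.single (0 : Fin 2) 1 1
        + (starRingEnd ℂ c) • Matrix.single (1 : Fin 2) 0 1) * (K i)ᴴ)
      ≤ 2 * ‖c‖ := by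
  set M : Matrix (Fin 2) (Fin 2) ℂ := ∑ i, K i * (c • Matrix.single (0 : Fin 2) 1 1
        + (starRingEnd ℂ c) • Matrix.single (1 : Fin 2) 0 1) * (K i)ᴴ with hM
  have e01 : M 0 1 = ∑ i, (c * (K i 0 0 * starRingEnd ℂ (K i 1 1))
        + starRingEnd ℂ c * (K i 0 1 * starRingEnd ℂ (K i 1 0))) := by
    rw [hM]
    simp [Matrix.sum_apply, Matrix.mul_apply, Matrix.conjTranspose_apply, Fin.sum_univ_two,
      Matrix.single, Matrix.smul_apply]
    exact Finset.sum_congr rfl fun i _ => by ring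
  have e10 : M 1 0 = ∑ i, (starRingEnd ℂ c * (K i 1 1 * starRingEnd ℂ (K i 0 0))
        + c * (K i 1 0 * starRingEnd ℂ (K i 0 1))) := by
    rw [hM]
    simp [Matrix.sum_apply, Matrix.mul_apply, Matrix.conjTranspose_apply, Fin.sum_univ_two,
      Matrix.single, Matrix.smul_apply]
    exact Finset.sum_congr rfl fun i _ => by ring
  have hbound : ∀ i : Fin m, ‖c * (K i 0 0 * starRingEnd ℂ (K i 1 1))
        + starRingEnd ℂ c * (K i 0 1 * starRingEnd ℂ (K i 1 0))‖
      ≤ ‖c‖ * (‖K i 0 0‖ * ‖K i 1 1‖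
        + ‖K i 0 1‖ * ‖K i 1 0‖) := by
    intro i
    refine le_trans (norm_add_le _ _) ?_
    simp only [norm_mul, Complex.norm_conj]
    ring_nf
    exact le_refl _
  have hbound2 : ∀ i : Fin m, ‖starRingEnd ℂ c * (K i 1 1 * starRingEnd ℂ (K i 0 0))
        + c * (K i 1 0 * starRingEnd ℂ (K i 0 1))‖
      ≤ ‖c‖ * (‖K i 0 0‖ * ‖K i 1 1‖
        + ‖K i 0 1‖ * ‖K i 1 0‖) := by
    intro i
    refine le_trans (norm_add_le _ _) ?_
    simp only [norm_mul, Complex.norm_conj]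
    ring_nf
    exact le_refl _
  have hS := kraus_bound K hK
  have hcn : (0:ℝ) ≤ ‖c‖ := norm_nonneg _
  rw [Cl1_two, e01, e10]
  calc ‖∑ i, (c * (K i 0 0 * starRingEnd ℂ (K i 1 1))
        + starRingEnd ℂ c * (K i 0 1 * starRingEnd ℂ (K i 1 0)))‖
      + ‖∑ i, (starRingEnd ℂ c * (K i 1 1 * starRingEnd ℂ (K i 0 0))
        + c * (K i 1 0 * starRingEnd ℂ (K i 0 1)))‖
      ≤ (∑ i, ‖c‖ * (‖K i 0 0‖ * ‖K i 1 1‖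
          + ‖K i 0 1‖ * ‖K i 1 0‖))
        + (∑ i, ‖c‖ * (‖K i 0 0‖ * ‖K i 1 1‖
          + ‖K i 0 1‖ * ‖K i 1 0‖)) := by
        gcongr
        · exact le_trans (norm_sum_le _ _) (Finset.sum_le_sum fun i _ => hbound i)
        · exact le_trans (norm_sum_le _ _) (Finset.sum_le_sum fun i _ => hbound2 i)
    _ = 2 * (‖c‖ * ∑ i, (‖K i 0 0‖ * ‖K i 1 1‖
          + ‖K i 0 1‖ * ‖K i 1 0‖)) := by
        rw [Finset.mul_sum]; ring
    _ ≤ 2 * (‖c‖ * 1) := by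
        gcongr
    _ = 2 * ‖c‖ := by ring

lemma diag_nonneg {n : ℕ} {ρ : Matrix (Fin n) (Fin n) ℂ} (h : ρ.PosSemidef) (i : Fin n) :
    0 ≤ (ρ i i).re ∧ (ρ i i).im = 0 := by
  have h2 := h.dotProduct_mulVec_nonneg (Pi.single i 1)
  have : (0:ℂ) ≤ ρ i i := by
    simpa [dotProduct, Pi.single_apply] using h2
  rw [Complex.le_def] at this
  exact ⟨by simpa using this.1, by simpa using this.2.symm⟩

lemma stdDensity (i : Fin 2) : (Matrix.single i i (1:ℂ)).PosSemidef ∧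
    (Matrix.single i i (1:ℂ)).trace = 1 ∧ (Matrix.single i i (1:ℂ)).IsDiag := by
  refine ⟨Matrix.PosSemidef.of_dotProduct_mulVec_nonneg ?_ ?_, ?_, ?_⟩
  · ext a b
    fin_cases a <;> fin_cases b <;> fin_cases i <;>
      simp [Matrix.conjTranspose_apply, Matrix.single]
  · intro x
    have : star x ⬝ᵥ (Matrix.single i i (1:ℂ)) *ᵥ x
        = (Complex.normSq (x i) : ℂ) := by
      simp [dotProduct, Matrix.mulVec, Fin.sum_univ_two, Matrix.single]
      fin_cases i <;> simp [Complex.normSq_apply, Complex.ext_iff, mul_comm]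
    rw [this]
    exact_mod_cast Complex.zero_le_real.mpr (Complex.normSq_nonneg _)
  · simp [Matrix.trace, Fin.sum_univ_two, Matrix.diag, Matrix.single]
  · intro a b hab
    fin_cases a <;> fin_cases b <;> simp_all [Matrix.single]

lemma part1 (Φ : Matrix (Fin 2) (Fin 2) ℂ → Matrix (Fin 2) (Fin 2) ℂ)
    (hΦ : IsQuantumOp Φ) (ρ : Matrix (Fin 2) (Fin 2) ℂ) (hρ : IsDensity ρ) :
    Cl1 (Φ ρ) - Cl1 ρ ≤
      max (Cl1 (Φ (Matrix.single (0 : Fin 2) 0 (1 : ℂ))))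
          (Cl1 (Φ (Matrix.single (1 : Fin 2) 1 (1 : ℂ)))) := by
  obtain ⟨m, K, hK1, hK2⟩ := hΦ
  set M0 := Cl1 (Φ (Matrix.single (0 : Fin 2) 0 (1 : ℂ))) with hM0
  set M1 := Cl1 (Φ (Matrix.single (1 : Fin 2) 1 (1 : ℂ))) with hM1
  set p := (ρ 0 0).re with hp
  set q := (ρ 1 1).re with hq
  set c := ρ 0 1 with hc
  have hp0 : 0 ≤ p := (diag_nonneg hρ.1 0).1
  have hq0 : 0 ≤ q := (diag_nonneg hρ.1 1).1
  have hρ00 : ρ 0 0 = (p : ℂ) := by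
    apply Complex.ext <;> simp [hp, (diag_nonneg hρ.1 0).2]
  have hρ11 : ρ 1 1 = (q : ℂ) := by
    apply Complex.ext <;> simp [hq, (diag_nonneg hρ.1 1).2]
  have hpq : p + q = 1 := by
    have := congrArg Complex.re hρ.2
    simpa [Matrix.trace, Fin.sum_univ_two, Matrix.diag] using this
  have hherm : ρ 1 0 = starRingEnd ℂ c := by
    have := congrFun (congrFun hρ.1.1 1) 0
    simpa [Matrix.conjTranspose_apply] using this.symm
  -- linearity
  have hlin : ∀ A B : Matrix (Fin 2) (Fin 2) ℂ, Φ (A + B) = Φ A + Φ B := by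
    intro A B
    rw [hK2, hK2, hK2, ← Finset.sum_add_distrib]
    exact Finset.sum_congr rfl fun i _ => by rw [mul_add, add_mul]
  have hsmul : ∀ (z : ℂ) (A : Matrix (Fin 2) (Fin 2) ℂ), Φ (z • A) = z • Φ A := by
    intro z A
    rw [hK2, hK2, Finset.smul_sum]
    exact Finset.sum_congr rfl fun i _ => by rw [Matrix.mul_smul, Matrix.smul_mul]
  have hdec : ρ = (ρ 0 0) • Matrix.single (0 : Fin 2) 0 1
      + (ρ 1 1) • Matrix.single (1 : Fin 2) 1 1
      + ((ρ 0 1) • Matrix.single (0 : Fin 2) 1 1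
        + (ρ 1 0) • Matrix.single (1 : Fin 2) 0 1) := by
    ext i j
    fin_cases i <;> fin_cases j <;> simp [Matrix.single]
  have hX : Cl1 (Φ ((ρ 0 1) • Matrix.single (0 : Fin 2) 1 1
      + (ρ 1 0) • Matrix.single (1 : Fin 2) 0 1)) ≤ 2 * ‖c‖ := by
    rw [hK2, hherm, ← hc]
    exact off_bound K hK1 c
  have hCl1ρ : Cl1 ρ = 2 * ‖c‖ := by
    rw [Cl1_two, ← hc, hherm, Complex.norm_conj]; ring
  have hmain : Cl1 (Φ ρ) ≤ p * M0 + q * M1 + 2 * ‖c‖ := by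
    calc Cl1 (Φ ρ) = Cl1 ((ρ 0 0) • Φ (Matrix.single (0 : Fin 2) 0 1)
          + (ρ 1 1) • Φ (Matrix.single (1 : Fin 2) 1 1)
          + Φ ((ρ 0 1) • Matrix.single (0 : Fin 2) 1 1
            + (ρ 1 0) • Matrix.single (1 : Fin 2) 0 1)) := by
          rw [← hsmul, ← hsmul, ← hlin, ← hlin, ← hdec]
      _ ≤ Cl1 ((ρ 0 0) • Φ (Matrix.single (0 : Fin 2) 0 1))
          + Cl1 ((ρ 1 1) • Φ (Matrix.single (1 : Fin 2) 1 1))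
          + Cl1 (Φ ((ρ 0 1) • Matrix.single (0 : Fin 2) 1 1
            + (ρ 1 0) • Matrix.single (1 : Fin 2) 0 1)) :=
          le_trans (Cl1_add_le _ _) (by gcongr; exact Cl1_add_le _ _)
      _ ≤ p * M0 + q * M1 + 2 * ‖c‖ := by
          rw [Cl1_smul, Cl1_smul, hρ00, hρ11, Complex.norm_real, Complex.norm_real, Real.norm_eq_abs, Real.norm_eq_abs,
            abs_of_nonneg hp0, abs_of_nonneg hq0]
          gcongr
  rw [hCl1ρ]
  have hle : p * M0 + q * M1 ≤ max M0 M1 := by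
    have h1 : M0 ≤ max M0 M1 := le_max_left _ _
    have h2 : M1 ≤ max M0 M1 := le_max_right _ _
    calc p * M0 + q * M1 ≤ p * max M0 M1 + q * max M0 M1 :=
          add_le_add (mul_le_mul_of_nonneg_left h1 hp0) (mul_le_mul_of_nonneg_left h2 hq0)
      _ = (p + q) * max M0 M1 := by ring
      _ = max M0 M1 := by rw [hpq, one_mul]
  linarith

theorem cohering_power_eq_generalized_cohering_power_qubit
    (Φ : Matrix (Fin 2) (Fin 2) ℂ → Matrix (Fin 2) (Fin 2) ℂ)
    (hΦ : IsQuantumOp Φ) :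
    (∀ ρ : Matrix (Fin 2) (Fin 2) ℂ, IsDensity ρ →
      Cl1 (Φ ρ) - Cl1 ρ ≤
        max (Cl1 (Φ (Matrix.single (0 : Fin 2) 0 (1 : ℂ))))
            (Cl1 (Φ (Matrix.single (1 : Fin 2) 1 (1 : ℂ))))) ∧
    sSup {x : ℝ | ∃ ρ : Matrix (Fin 2) (Fin 2) ℂ, IsDensity ρ ∧ x = Cl1 (Φ ρ) - Cl1 ρ} =
      sSup {x : ℝ | ∃ σ : Matrix (Fin 2) (Fin 2) ℂ, IsDensity σ ∧ σ.IsDiag ∧ x = Cl1 (Φ σ)} := by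
  have hpart1 : ∀ ρ : Matrix (Fin 2) (Fin 2) ℂ, IsDensity ρ →
      Cl1 (Φ ρ) - Cl1 ρ ≤
        max (Cl1 (Φ (Matrix.single (0 : Fin 2) 0 (1 : ℂ))))
            (Cl1 (Φ (Matrix.single (1 : Fin 2) 1 (1 : ℂ)))) :=
    fun ρ hρ => part1 Φ hΦ ρ hρ
  refine ⟨hpart1, ?_⟩
  set M0 := Cl1 (Φ (Matrix.single (0 : Fin 2) 0 (1 : ℂ))) with hM0
  set M1 := Cl1 (Φ (Matrix.single (1 : Fin 2) 1 (1 : ℂ))) with hM1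
  set S := {x : ℝ | ∃ ρ : Matrix (Fin 2) (Fin 2) ℂ, IsDensity ρ ∧ x = Cl1 (Φ ρ) - Cl1 ρ} with hS
  set T := {x : ℝ | ∃ σ : Matrix (Fin 2) (Fin 2) ℂ, IsDensity σ ∧ σ.IsDiag ∧ x = Cl1 (Φ σ)}
    with hT
  have hE0 := stdDensity 0
  have hE1 := stdDensity 1
  have hM0T : M0 ∈ T := ⟨_, ⟨hE0.1, hE0.2.1⟩, hE0.2.2, rfl⟩
  have hM1T : M1 ∈ T := ⟨_, ⟨hE1.1, hE1.2.1⟩, hE1.2.2, rfl⟩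
  have hTS : T ⊆ S := by
    rintro x ⟨σ, hσd, hσdiag, rfl⟩
    exact ⟨σ, hσd, by rw [Cl1_diag hσdiag, sub_zero]⟩
  have hSub : ∀ x ∈ S, x ≤ max M0 M1 := by
    rintro x ⟨ρ, hρ, rfl⟩
    exact hpart1 ρ hρ
  have hSne : S.Nonempty := ⟨_, hTS hM0T⟩
  have hSbdd : BddAbove S := ⟨max M0 M1, fun x hx => hSub x hx⟩
  have hTbdd : BddAbove T := ⟨max M0 M1, fun x hx => hSub x (hTS hx)⟩
  apply le_antisymm
  · apply csSup_le hSne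
    intro x hx
    exact (hSub x hx).trans (max_le (le_csSup hTbdd hM0T) (le_csSup hTbdd hM1T))
  · exact csSup_le_csSup hSbdd ⟨_, hM0T⟩ hTS
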